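/- arXiv:1712.09912 — 3 statements merged into one kernel-verified Lean document; each statement's English description precedes it below -/
import Mathlib

section
/- Let P₀ = N_p(0, I_p) and, for unit vectors u, v ∈ R^p and κ with |κ·u^T v| < 1, let P_u = N_p(0, I_p + κ u u^T) and P_v = N_p(0, I_p + κ v v^T). Then E_{P₀}[ (dP_u/dP₀)(dP_v/dP₀) ] = (1 − (κ u^T v)²)^{-1/2}. -/
open MeasureTheory Matrix

/-- Density of the centered `p`-dimensional Gaussian `N_p(0, S)` at `x`. -/
noncomputable def gaussDensity (p : ℕ) (S : Matrix (Fin p) (Fin p) ℝ)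
    (x : Fin p → ℝ) : ℝ :=
  (2 * Real.pi) ^ (-(p : ℝ) / 2) * S.det ^ (-(1:ℝ) / 2) *
    Real.exp (-(x ⬝ᵥ S⁻¹.mulVec x) / 2)

section Aux

variable {p : ℕ}

/-! ### Auxiliary matrix algebra lemmas -/

lemma aux_vmv_mul (u v w z : Fin p → ℝ) :
    vecMulVec u v * vecMulVec w z = (v ⬝ᵥ w) • vecMulVec u z := by
  ext i j
  simp only [mul_apply, vecMulVec_apply, Matrix.smul_apply, smul_eq_mul, dotProduct, Finset.sum_mul]
  exact Finset.sum_congr rfl fun k _ => by ring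

lemma aux_smul_vmv (c : ℝ) (u v : Fin p → ℝ) : c • vecMulVec u v = vecMulVec (c • u) v := by
  ext i j; simp [vecMulVec_apply, mul_assoc]

lemma aux_det_one_add_vmv (c : ℝ) (u v : Fin p → ℝ) :
    (1 + c • vecMulVec u v).det = 1 + c * (v ⬝ᵥ u) := by
  rw [aux_smul_vmv, vecMulVec_eq Unit, det_one_add_replicateCol_mul_replicateRow]
  simp [dotProduct, Finset.mul_sum]
  exact Finset.sum_congr rfl fun k _ => by ring

lemma aux_quad_vmv (u w x : Fin p → ℝ) :
    x ⬝ᵥ (vecMulVec u w).mulVec x = (u ⬝ᵥ x) * (w ⬝ᵥ x) := by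
  have h : ∀ i, (vecMulVec u w).mulVec x i = u i * (w ⬝ᵥ x) := by
    intro i
    simp only [mulVec, dotProduct, vecMulVec_apply, Finset.mul_sum]
    exact Finset.sum_congr rfl fun j _ => by ring
  simp only [dotProduct]
  rw [Finset.sum_mul]
  refine Finset.sum_congr rfl fun i _ => ?_
  rw [h i, dotProduct]; ring

lemma aux_inv_one_add_vmv (κ : ℝ) (hκ : 0 ≤ κ) (u : Fin p → ℝ) (hu : u ⬝ᵥ u = 1) :
    (1 + κ • vecMulVec u u : Matrix (Fin p) (Fin p) ℝ)⁻¹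
      = 1 - (κ/(1+κ)) • vecMulVec u u := by
  have h1 : (0:ℝ) < 1 + κ := by linarith
  apply Matrix.inv_eq_right_inv
  have expand : (1 + κ • vecMulVec u u) * (1 - (κ/(1+κ)) • vecMulVec u u)
      = 1 + (κ - κ/(1+κ) - κ * (κ/(1+κ))) • vecMulVec u u := by
    rw [Matrix.mul_sub, Matrix.mul_one, Matrix.add_mul, Matrix.one_mul, Matrix.smul_mul,
      Matrix.mul_smul, smul_smul, aux_vmv_mul, hu, one_smul]
    rw [sub_smul, sub_smul]
    abel
  rw [expand]
  have : κ - κ/(1+κ) - κ * (κ/(1+κ)) = 0 := by field_simp; ring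
  rw [this, zero_smul, add_zero]

/-! ### Positivity -/

lemma aux_key_ineq (X α β t κ : ℝ) (hX : 0 < X) (hκ : 0 ≤ κ) (ht : t^2 ≤ 1)
    (hs : κ^2*t^2 < 1) (hα : α^2 ≤ X) (hβ : β^2 ≤ X)
    (hG : 0 ≤ (1-t^2) * ((1-t^2)*X - (α^2+β^2-2*t*α*β))) :
    κ*(α^2+β^2) < (1+κ)*X := by
  rcases eq_or_lt_of_le ht with h1 | h1
  · have hk1 : κ < 1 := by nlinarith
    nlinarith
  · have hG' : α^2+β^2-2*t*α*β ≤ (1-t^2)*X := by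
      have h2 : (0:ℝ) < 1 - t^2 := by linarith
      nlinarith
    rcases le_or_gt 0 t with h2 | h2
    · have ht1 : t < 1 := by nlinarith
      have hkt : κ * t < 1 := by nlinarith
      have hS : α^2+β^2 ≤ (1+t)*X := by
        have h3 : (α^2+β^2)*(1-t) ≤ (1-t^2)*X := by nlinarith [sq_nonneg (α-β)]
        have h4 : (0:ℝ) < 1 - t := by linarith
        nlinarith
      nlinarith
    · have ht1 : -1 < t := by nlinarith
      have hkt : κ * (-t) < 1 := by nlinarith
      have hS : α^2+β^2 ≤ (1-t)*X := by
        have h3 : (α^2+β^2)*(1+t) ≤ (1-t^2)*X := by nlinarith [sq_nonneg (α+β)]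
        have h4 : (0:ℝ) < 1 + t := by linarith
        nlinarith
      nlinarith

lemma aux_bessel (u v x : Fin p → ℝ) (hu : u ⬝ᵥ u = 1) (hv : v ⬝ᵥ v = 1) :
    0 ≤ (1-(u ⬝ᵥ v)^2) * ((1-(u ⬝ᵥ v)^2)*(x ⬝ᵥ x)
      - ((u ⬝ᵥ x)^2+(v ⬝ᵥ x)^2-2*(u ⬝ᵥ v)*(u ⬝ᵥ x)*(v ⬝ᵥ x))) := by
  set t := u ⬝ᵥ v; set α := u ⬝ᵥ x; set β := v ⬝ᵥ x
  set w : Fin p → ℝ := fun i => (1-t^2)*x i - (α-t*β)*u i - (β-t*α)*v i with hw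
  have h0 : (0:ℝ) ≤ ∑ i, w i * w i := Finset.sum_nonneg fun i _ => mul_self_nonneg _
  have hterm : ∀ i, w i * w i =
      (1-t^2)^2*(x i*x i) + (α-t*β)^2*(u i*u i) + (β-t*α)^2*(v i*v i)
      + (- (2*(1-t^2)*(α-t*β)))*(u i*x i) + (- (2*(1-t^2)*(β-t*α)))*(v i*x i)
      + (2*(α-t*β)*(β-t*α))*(u i*v i) := by
    intro i; simp only [hw]; ring
  rw [Finset.sum_congr rfl (fun i _ => hterm i)] at h0
  simp only [Finset.sum_add_distrib, ← Finset.mul_sum] at h0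
  have e1 : ∑ i, x i * x i = x ⬝ᵥ x := rfl
  have e2 : ∑ i, u i * u i = 1 := hu
  have e3 : ∑ i, v i * v i = 1 := hv
  have e4 : ∑ i, u i * x i = α := rfl
  have e5 : ∑ i, v i * x i = β := rfl
  have e6 : ∑ i, u i * v i = t := rfl
  rw [e1, e2, e3, e4, e5, e6] at h0
  nlinarith [h0]

lemma aux_A_posdef (u v : Fin p → ℝ) (hu : u ⬝ᵥ u = 1) (hv : v ⬝ᵥ v = 1)
    (κ : ℝ) (hκ : 0 ≤ κ) (huv : (κ * (u ⬝ᵥ v)) ^ 2 < 1) (a : ℝ) (ha : a = κ/(1+κ)) :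
    (1 - a • vecMulVec u u - a • vecMulVec v v : Matrix (Fin p) (Fin p) ℝ).PosDef := by
  have h1 : (0:ℝ) < 1 + κ := by linarith
  rw [Matrix.posDef_iff_dotProduct_mulVec]
  constructor
  · ext i j
    simp [conjTranspose_apply, Matrix.sub_apply, one_apply, Matrix.smul_apply, vecMulVec_apply, Matrix.one_apply,
      eq_comm, mul_comm]
  · intro x hx
    have hX : 0 < x ⬝ᵥ x := by
      simp only [dotProduct]
      have ⟨i, hi⟩ : ∃ i, x i ≠ 0 := Function.ne_iff.mp hx
      exact Finset.sum_pos' (fun j _ => mul_self_nonneg _)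
        ⟨i, Finset.mem_univ i, mul_self_pos.mpr hi⟩
    have cs : ∀ y z : Fin p → ℝ, (y ⬝ᵥ z)^2 ≤ (y ⬝ᵥ y) * (z ⬝ᵥ z) := by
      intro y z
      have := Finset.sum_mul_sq_le_sq_mul_sq Finset.univ y z
      simpa [dotProduct, sq] using this
    have hα : (u ⬝ᵥ x)^2 ≤ x ⬝ᵥ x := by have := cs u x; rwa [hu, one_mul] at this
    have hβ : (v ⬝ᵥ x)^2 ≤ x ⬝ᵥ x := by have := cs v x; rwa [hv, one_mul] at this
    have ht : (u ⬝ᵥ v)^2 ≤ 1 := by have := cs u v; rwa [hu, hv, one_mul] at this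
    have hs : κ^2*(u ⬝ᵥ v)^2 < 1 := by nlinarith
    have hkey := aux_key_ineq (x ⬝ᵥ x) (u ⬝ᵥ x) (v ⬝ᵥ x) (u ⬝ᵥ v) κ hX hκ ht hs hα hβ
      (aux_bessel u v x hu hv)
    have hform : star x ⬝ᵥ ((1 - a • vecMulVec u u - a • vecMulVec v v) *ᵥ x)
        = x ⬝ᵥ x - a * ((u ⬝ᵥ x) * (u ⬝ᵥ x)) - a * ((v ⬝ᵥ x) * (v ⬝ᵥ x)) := by
      rw [show (star x : Fin p → ℝ) = x from rfl]
      rw [Matrix.sub_mulVec, Matrix.sub_mulVec, Matrix.one_mulVec, Matrix.smul_mulVec,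
        Matrix.smul_mulVec, dotProduct_sub, dotProduct_sub, dotProduct_smul,
        dotProduct_smul, aux_quad_vmv, aux_quad_vmv, smul_eq_mul, smul_eq_mul]
    rw [hform]
    have haa : a * (1+κ) = κ := by rw [ha]; field_simp
    have expand : (1+κ) * ((x ⬝ᵥ x) - a*((u ⬝ᵥ x)*(u ⬝ᵥ x)) - a*((v ⬝ᵥ x)*(v ⬝ᵥ x)))
        = (1+κ)*(x ⬝ᵥ x) - κ*((u ⬝ᵥ x)^2+(v ⬝ᵥ x)^2) := by
      linear_combination (-((u ⬝ᵥ x)^2+(v ⬝ᵥ x)^2)) * haa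
    have key2 : 0 < (1+κ) * ((x ⬝ᵥ x) - a*((u ⬝ᵥ x)*(u ⬝ᵥ x)) - a*((v ⬝ᵥ x)*(v ⬝ᵥ x))) := by
      rw [expand]; linarith [hkey]
    nlinarith [key2, h1]

/-! ### Gaussian integrals -/

lemma aux_std_gauss (p : ℕ) :
    ∫ y : Fin p → ℝ, Real.exp (-(y ⬝ᵥ y)/2) = (2*Real.pi)^((p:ℝ)/2) := by
  have h : ∀ y : Fin p → ℝ, Real.exp (-(y ⬝ᵥ y)/2) = ∏ i, Real.exp (-(2⁻¹) * (y i)^2) := by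
    intro y
    rw [← Real.exp_sum]
    congr 1
    simp [dotProduct, Finset.sum_div, neg_div, Finset.sum_neg_distrib]
    ring_nf
  simp_rw [h]
  rw [MeasureTheory.volume_pi, MeasureTheory.integral_fintype_prod_eq_pow (ι := Fin p) (fun s => Real.exp (-(2⁻¹) * s^2))]
  rw [integral_gaussian]
  rw [Fintype.card_fin]
  rw [show Real.pi / 2⁻¹ = 2*Real.pi by ring]
  rw [show Real.sqrt (2*Real.pi) = (2*Real.pi)^((1:ℝ)/2) from Real.sqrt_eq_rpow _]
  rw [← Real.rpow_natCast ((2*Real.pi)^((1:ℝ)/2)) p, ← Real.rpow_mul (by positivity)]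
  ring_nf

open scoped MatrixOrder in
lemma aux_gauss_int (p : ℕ) (A : Matrix (Fin p) (Fin p) ℝ) (hA : A.PosDef) :
    ∫ x : Fin p → ℝ, Real.exp (-(x ⬝ᵥ A.mulVec x)/2)
      = (2*Real.pi)^((p:ℝ)/2) * A.det ^ (-(1:ℝ)/2) := by
  set B := CFC.sqrt A with hBdef
  have hBB : B * B = A := CFC.sqrt_mul_sqrt_self A hA.posSemidef.nonneg
  have hBsym : Bᵀ = B := by
    have := (CFC.sqrt_nonneg A).posSemidef.1
    rw [← Matrix.conjTranspose_eq_transpose_of_trivial]; exact this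
  have hdetA : 0 < A.det := hA.det_pos
  have hdet2 : B.det * B.det = A.det := by rw [← det_mul, hBB]
  have hdetBnn : 0 ≤ B.det := by
    rw [(CFC.sqrt_nonneg A).posSemidef.1.det_eq_prod_eigenvalues]
    exact Finset.prod_nonneg fun i _ => (CFC.sqrt_nonneg A).posSemidef.eigenvalues_nonneg i
  have hdetB : 0 < B.det := lt_of_le_of_ne hdetBnn (by
    intro h; rw [← h] at hdet2; simp at hdet2; rw [← hdet2] at hdetA; simp at hdetA)
  have hquad : ∀ x : Fin p → ℝ, x ⬝ᵥ A.mulVec x = (B.mulVec x) ⬝ᵥ (B.mulVec x) := by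
    intro x
    rw [← hBB, ← Matrix.mulVec_mulVec, Matrix.dotProduct_mulVec, ← Matrix.mulVec_transpose, hBsym]
  have hfdet : LinearMap.det (Matrix.toLin' B) ≠ 0 := by
    rw [LinearMap.det_toLin']; exact hdetB.ne'
  have hmap : Measure.map (Matrix.toLin' B) volume
      = ENNReal.ofReal |(LinearMap.det (Matrix.toLin' B))⁻¹| • volume :=
    Real.map_linearMap_volume_pi_eq_smul_volume_pi hfdet
  have hdp : Continuous (fun y : Fin p → ℝ => y ⬝ᵥ y) := by
    simp only [dotProduct]
    exact continuous_finset_sum _ fun i _ => (continuous_apply i).mul (continuous_apply i)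
  have hcont : Continuous (fun y : Fin p → ℝ => Real.exp (-(y ⬝ᵥ y)/2)) :=
    Real.continuous_exp.comp ((hdp.neg).div_const 2)
  have hmeas : AEMeasurable (Matrix.toLin' B) (volume : Measure (Fin p → ℝ)) :=
    (LinearMap.continuous_on_pi _).measurable.aemeasurable
  have key : ∫ y : Fin p → ℝ, Real.exp (-(y ⬝ᵥ y)/2) ∂(Measure.map (Matrix.toLin' B) volume)
      = ∫ x : Fin p → ℝ, Real.exp (-((B.mulVec x) ⬝ᵥ (B.mulVec x))/2) := by
    rw [integral_map hmeas hcont.aestronglyMeasurable]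
    simp [Matrix.toLin'_apply]
  rw [hmap, integral_smul_measure, aux_std_gauss] at key
  simp_rw [hquad]
  rw [← key, LinearMap.det_toLin']
  rw [abs_of_pos (by positivity), ENNReal.toReal_ofReal (by positivity)]
  have hdB : B.det = A.det ^ ((1:ℝ)/2) := by
    rw [← Real.sqrt_eq_rpow, show A.det = B.det * B.det from hdet2.symm,
      Real.sqrt_mul_self hdetBnn]
  rw [hdB, smul_eq_mul, ← Real.rpow_neg_one, ← Real.rpow_mul hdetA.le]
  ring_nf

/-! ### Pointwise simplification of the integrand -/

lemma aux_realpt (c d1 d2 q1 q2 X : ℝ) (hc : c ≠ 0) :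
    (c*d1*Real.exp (-q1/2) / (c*1*Real.exp (-X/2))) *
      (c*d2*Real.exp (-q2/2) / (c*1*Real.exp (-X/2))) * (c*1*Real.exp (-X/2))
    = c*d1*d2*Real.exp (-(q1+q2-X)/2) := by
  have hE : ∀ r : ℝ, Real.exp r ≠ 0 := fun r => (Real.exp_pos r).ne'
  field_simp
  ring_nf
  rw [Real.exp_add, Real.exp_add, show X*(1/2) = -(X*(-1/2)) by ring, Real.exp_neg]
  field_simp

lemma aux_pointwise {p : ℕ} (Su Sv : Matrix (Fin p) (Fin p) ℝ) (x : Fin p → ℝ) :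
    (gaussDensity p Su x / gaussDensity p 1 x) *
        (gaussDensity p Sv x / gaussDensity p 1 x) * gaussDensity p 1 x
      = (2*Real.pi) ^ (-(p:ℝ)/2) * Su.det ^ (-(1:ℝ)/2) * Sv.det ^ (-(1:ℝ)/2) *
        Real.exp (-(x ⬝ᵥ (Su⁻¹ + Sv⁻¹ - 1).mulVec x)/2) := by
  have hq : x ⬝ᵥ (Su⁻¹ + Sv⁻¹ - 1).mulVec x
      = x ⬝ᵥ Su⁻¹.mulVec x + x ⬝ᵥ Sv⁻¹.mulVec x - x ⬝ᵥ x := by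
    rw [Matrix.sub_mulVec, Matrix.add_mulVec, Matrix.one_mulVec, dotProduct_sub, dotProduct_add]
  have hc : (2*Real.pi) ^ (-(p:ℝ)/2) ≠ 0 :=
    (Real.rpow_pos_of_pos (by positivity) _).ne'
  simp only [gaussDensity, Matrix.det_one, inv_one, Matrix.one_mulVec, Real.one_rpow, hq]
  have := aux_realpt ((2*Real.pi) ^ (-(p:ℝ)/2)) (Su.det ^ (-(1:ℝ)/2)) (Sv.det ^ (-(1:ℝ)/2))
    (x ⬝ᵥ Su⁻¹.mulVec x) (x ⬝ᵥ Sv⁻¹.mulVec x) (x ⬝ᵥ x) hc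
  simpa using this

/-! ### Determinant of the triple product -/

lemma aux_triple (u v : Fin p → ℝ) (κ : ℝ)
    (hposu : (1 + κ • vecMulVec u u : Matrix (Fin p) (Fin p) ℝ).PosDef)
    (hposv : (1 + κ • vecMulVec v v : Matrix (Fin p) (Fin p) ℝ).PosDef) :
    (1 + κ • vecMulVec u u) *
      ((1 + κ • vecMulVec u u)⁻¹ + (1 + κ • vecMulVec v v)⁻¹ - 1) *
      (1 + κ • vecMulVec v v)
    = 1 + (-(κ^2*(u ⬝ᵥ v))) • vecMulVec u v := by
  have hu1 : (1 + κ • vecMulVec u u) * (1 + κ • vecMulVec u u)⁻¹ = 1 :=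
    Matrix.mul_nonsing_inv _ hposu.det_pos.ne'.isUnit
  have hv1 : (1 + κ • vecMulVec v v)⁻¹ * (1 + κ • vecMulVec v v) = 1 :=
    Matrix.nonsing_inv_mul _ hposv.det_pos.ne'.isUnit
  have step1 : (1 + κ • vecMulVec u u) *
      ((1 + κ • vecMulVec u u)⁻¹ + (1 + κ • vecMulVec v v)⁻¹ - 1)
      = 1 + (1 + κ • vecMulVec u u) * (1 + κ • vecMulVec v v)⁻¹ - (1 + κ • vecMulVec u u) := by
    rw [Matrix.mul_sub, Matrix.mul_add, Matrix.mul_one, hu1]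
  have step2 : (1 + (1 + κ • vecMulVec u u) * (1 + κ • vecMulVec v v)⁻¹
        - (1 + κ • vecMulVec u u)) * (1 + κ • vecMulVec v v)
      = (1 + κ • vecMulVec v v) + (1 + κ • vecMulVec u u)
        - (1 + κ • vecMulVec u u) * (1 + κ • vecMulVec v v) := by
    rw [Matrix.sub_mul, Matrix.add_mul, Matrix.one_mul, Matrix.mul_assoc, hv1, Matrix.mul_one]
  have step3 : (1 + κ • vecMulVec u u) * (1 + κ • vecMulVec v v)
      = 1 + κ • vecMulVec v v + κ • vecMulVec u u
        + (κ*(κ*(u ⬝ᵥ v))) • vecMulVec u v := by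
    rw [Matrix.mul_add, Matrix.mul_one, Matrix.add_mul, Matrix.one_mul, Matrix.smul_mul,
      Matrix.mul_smul, aux_vmv_mul]
    module
  rw [step1, step2, step3]
  module

end Aux

theorem gaussian_likelihood_ratio_product {p : ℕ} (u v : Fin p → ℝ)
    (hu : u ⬝ᵥ u = 1) (hv : v ⬝ᵥ v = 1) (κ : ℝ) (hκ : 0 ≤ κ)
    (hposu : (1 + κ • vecMulVec u u : Matrix (Fin p) (Fin p) ℝ).PosDef)
    (hposv : (1 + κ • vecMulVec v v : Matrix (Fin p) (Fin p) ℝ).PosDef)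
    (huv : (κ * (u ⬝ᵥ v)) ^ 2 < 1) :
    ∫ x : Fin p → ℝ,
        (gaussDensity p (1 + κ • vecMulVec u u) x / gaussDensity p 1 x) *
        (gaussDensity p (1 + κ • vecMulVec v v) x / gaussDensity p 1 x) *
        gaussDensity p 1 x
      = (1 - (κ * (u ⬝ᵥ v)) ^ 2) ^ (-(1:ℝ) / 2) := by
  set Su : Matrix (Fin p) (Fin p) ℝ := 1 + κ • vecMulVec u u with hSu
  set Sv : Matrix (Fin p) (Fin p) ℝ := 1 + κ • vecMulVec v v with hSv
  set A : Matrix (Fin p) (Fin p) ℝ := Su⁻¹ + Sv⁻¹ - 1 with hAdef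
  have h1κ : (0:ℝ) < 1 + κ := by linarith
  have hAeq : A = 1 - (κ/(1+κ)) • vecMulVec u u - (κ/(1+κ)) • vecMulVec v v := by
    rw [hAdef, hSu, hSv, aux_inv_one_add_vmv κ hκ u hu, aux_inv_one_add_vmv κ hκ v hv]
    abel
  have hA : A.PosDef := by
    rw [hAeq]; exact aux_A_posdef u v hu hv κ hκ huv _ rfl
  have hdSu : 0 < Su.det := hposu.det_pos
  have hdSv : 0 < Sv.det := hposv.det_pos
  have hdA : 0 < A.det := hA.det_pos
  have hdet3 : Su.det * Sv.det * A.det = 1 - (κ*(u ⬝ᵥ v))^2 := by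
    have : Su.det * A.det * Sv.det = (Su * A * Sv).det := by rw [det_mul, det_mul]
    have h2 : (Su * A * Sv).det = 1 - (κ*(u ⬝ᵥ v))^2 := by
      rw [hAdef, hSu, hSv, aux_triple u v κ hposu hposv, aux_det_one_add_vmv,
        dotProduct_comm v u]
      ring
    linear_combination this + h2
  calc ∫ x : Fin p → ℝ,
        (gaussDensity p Su x / gaussDensity p 1 x) *
        (gaussDensity p Sv x / gaussDensity p 1 x) * gaussDensity p 1 x
      = ∫ x : Fin p → ℝ, (2*Real.pi) ^ (-(p:ℝ)/2) * Su.det ^ (-(1:ℝ)/2) * Sv.det ^ (-(1:ℝ)/2) *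
          Real.exp (-(x ⬝ᵥ A.mulVec x)/2) := by
        refine integral_congr_ae (Filter.Eventually.of_forall fun x => ?_)
        dsimp only
        rw [aux_pointwise Su Sv x, hAdef]
    _ = (2*Real.pi) ^ (-(p:ℝ)/2) * Su.det ^ (-(1:ℝ)/2) * Sv.det ^ (-(1:ℝ)/2) *
          ((2*Real.pi)^((p:ℝ)/2) * A.det ^ (-(1:ℝ)/2)) := by
        rw [MeasureTheory.integral_const_mul, aux_gauss_int p A hA]
    _ = ((2*Real.pi) ^ (-(p:ℝ)/2) * (2*Real.pi)^((p:ℝ)/2)) *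
          (Su.det ^ (-(1:ℝ)/2) * Sv.det ^ (-(1:ℝ)/2) * A.det ^ (-(1:ℝ)/2)) := by ring
    _ = (1 - (κ*(u ⬝ᵥ v))^2) ^ (-(1:ℝ)/2) := by
        rw [← Real.rpow_add (by positivity), ← Real.mul_rpow hdSu.le hdSv.le,
          ← Real.mul_rpow (by positivity) hdA.le, hdet3,
          show -(p:ℝ)/2 + (p:ℝ)/2 = 0 by ring, Real.rpow_zero, one_mul]
end

section
/- Suppose the covariance matrices Σ_i of a piecewise constant sequence change only at points η_1 < … < η_K, and the interval (s,e) contains at least one change point. Then the function t ↦ ‖Σ̃_t^{s,e}‖_op on {s+1,…,e−1} attains its maximum at some true change point; i.e., argmax_t ‖Σ̃_t^{s,e}‖_op intersects {η_1,…,η_K}. -/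
open Finset Matrix

set_option maxHeartbeats 1000000
set_option synthInstance.maxHeartbeats 400000

/-- The `ℓ²`-operator norm of a real `p × p` matrix. -/
noncomputable def matOpNorm {p : ℕ} (S : Matrix (Fin p) (Fin p) ℝ) : ℝ :=
  ‖(Matrix.toEuclideanCLM (𝕜 := ℝ) S : EuclideanSpace ℝ (Fin p) →L[ℝ] EuclideanSpace ℝ (Fin p))‖

/-- The population covariance CUSUM statistic over `(s, e]` at time `t`. -/
noncomputable def covCusum {p : ℕ} (S : ℕ → Matrix (Fin p) (Fin p) ℝ) (s e t : ℕ) :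
    Matrix (Fin p) (Fin p) ℝ :=
  Real.sqrt (((e : ℝ) - t) / (((e : ℝ) - s) * ((t : ℝ) - s))) • (∑ i ∈ Ioc s t, S i) -
    Real.sqrt (((t : ℝ) - s) / (((e : ℝ) - s) * ((e : ℝ) - t))) • (∑ i ∈ Ioc t e, S i)

/-! ### Auxiliary scalar lemmas -/

/-- Scalar interpolation lemma. -/
lemma scalar_combo (a1 b1 a b a2 b2 : ℝ) (hb1 : 0 < b1) (hb : 0 < b) (hb2 : 0 < b2)
    (hp1 : a1 * b1 = a * b) (hp2 : a2 * b2 = a * b)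
    (h1 : b1 ≤ b) (h2 : b ≤ b2) :
    ∃ α β : ℝ, 0 ≤ α ∧ 0 ≤ β ∧ α + β ≤ 1 ∧
      α * a1 + β * a2 = a ∧ α * b1 + β * b2 = b := by
  rcases eq_or_lt_of_le (h1.trans h2) with hb12 | hb12
  · -- b1 = b2, hence b = b1
    have hbb : b = b1 := le_antisymm (hb12 ▸ h2) h1
    refine ⟨1, 0, zero_le_one, le_refl 0, by norm_num, ?_, by rw [hbb]; ring⟩
    have ha1 : a1 = a := by
      have h' := hp1
      rw [hbb] at h'
      have := mul_right_cancel₀ (ne_of_gt hb1) h'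
      linarith
    rw [ha1]; ring
  · have hsum : 0 < b1 + b2 := by linarith
    have hdiff : 0 < b2 - b1 := by linarith
    have hsq : 0 < b2 ^ 2 - b1 ^ 2 := by nlinarith
    set D := b * (b2 ^ 2 - b1 ^ 2) with hD
    have hDpos : 0 < D := mul_pos hb hsq
    refine ⟨b1 * (b2 ^ 2 - b ^ 2) / D, b2 * (b ^ 2 - b1 ^ 2) / D, ?_, ?_, ?_, ?_, ?_⟩
    · apply div_nonneg _ hDpos.le
      have : 0 ≤ b2 ^ 2 - b ^ 2 := by nlinarith
      exact mul_nonneg hb1.le this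
    · apply div_nonneg _ hDpos.le
      have : 0 ≤ b ^ 2 - b1 ^ 2 := by nlinarith
      exact mul_nonneg hb2.le this
    · rw [← add_div, div_le_one hDpos]
      nlinarith [mul_nonneg (sub_nonneg.mpr h1) (sub_nonneg.mpr h2), hdiff.le,
        mul_nonneg (mul_nonneg (sub_nonneg.mpr h1) (sub_nonneg.mpr h2)) hdiff.le]
    · have ha1 : a1 = a * b / b1 := by field_simp; linarith [hp1]
      have ha2 : a2 = a * b / b2 := by field_simp; linarith [hp2]
      rw [ha1, ha2, hD]
      field_simp
      ring
    · rw [hD]; field_simp; ring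

/-! ### The CUSUM coefficients -/

noncomputable def cc1 (s e τ : ℕ) : ℝ :=
  Real.sqrt (((e : ℝ) - τ) / (((e : ℝ) - s) * ((τ : ℝ) - s)))

noncomputable def cc2 (s e τ : ℕ) : ℝ :=
  Real.sqrt (((τ : ℝ) - s) / (((e : ℝ) - s) * ((e : ℝ) - τ)))

lemma casts {s e τ : ℕ} (hs : s < τ) (he : τ < e) :
    (0:ℝ) < (τ:ℝ) - s ∧ (0:ℝ) < (e:ℝ) - τ ∧ (0:ℝ) < (e:ℝ) - s := by
  have h1 : (s:ℝ) < τ := by exact_mod_cast hs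
  have h2 : (τ:ℝ) < e := by exact_mod_cast he
  refine ⟨by linarith, by linarith, by linarith⟩

lemma cc1_pos {s e τ : ℕ} (hs : s < τ) (he : τ < e) : 0 < cc1 s e τ := by
  obtain ⟨h1, h2, h3⟩ := casts hs he
  exact Real.sqrt_pos.mpr (div_pos h2 (mul_pos h3 h1))

lemma cc2_pos {s e τ : ℕ} (hs : s < τ) (he : τ < e) : 0 < cc2 s e τ := by
  obtain ⟨h1, h2, h3⟩ := casts hs he
  exact Real.sqrt_pos.mpr (div_pos h1 (mul_pos h3 h2))

lemma cc_prod {s e τ : ℕ} (hs : s < τ) (he : τ < e) :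
    cc1 s e τ * cc2 s e τ = ((e : ℝ) - s)⁻¹ := by
  obtain ⟨h1, h2, h3⟩ := casts hs he
  unfold cc1 cc2
  rw [← Real.sqrt_mul (by positivity)]
  rw [show ((e : ℝ) - τ) / (((e : ℝ) - s) * ((τ : ℝ) - s)) *
      (((τ : ℝ) - s) / (((e : ℝ) - s) * ((e : ℝ) - τ))) = (((e:ℝ) - s)⁻¹) ^ 2 by
    field_simp]
  exact Real.sqrt_sq (by positivity)

lemma cc_id {s e τ : ℕ} (hs : s < τ) (he : τ < e) :
    cc1 s e τ * ((τ : ℝ) - s) = cc2 s e τ * ((e : ℝ) - τ) := by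
  obtain ⟨h1, h2, h3⟩ := casts hs he
  unfold cc1 cc2
  rw [show ((τ:ℝ) - s) = Real.sqrt (((τ:ℝ) - s) ^ 2) from (Real.sqrt_sq h1.le).symm.trans rfl,
    show ((e:ℝ) - τ) = Real.sqrt (((e:ℝ) - τ) ^ 2) from (Real.sqrt_sq h2.le).symm.trans rfl]
  rw [← Real.sqrt_mul (by positivity), ← Real.sqrt_mul (by positivity)]
  congr 1
  simp only [Real.sqrt_sq h1.le, Real.sqrt_sq h2.le]
  field_simp

lemma cc2_mono {s e τ1 τ2 : ℕ} (hs : s < τ1) (h12 : τ1 ≤ τ2) (he : τ2 < e) :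
    cc2 s e τ1 ≤ cc2 s e τ2 := by
  obtain ⟨h1, h2, h3⟩ := casts hs (lt_of_le_of_lt h12 he)
  obtain ⟨h1', h2', h3'⟩ := casts (lt_of_lt_of_le hs h12) he
  have h12' : (τ1:ℝ) ≤ τ2 := by exact_mod_cast h12
  apply Real.sqrt_le_sqrt
  rw [div_le_div_iff₀ (by positivity) (by positivity)]
  nlinarith [mul_nonneg (mul_nonneg h3.le h3.le) (sub_nonneg.mpr h12')]

lemma cc1_anti {s e τ1 τ2 : ℕ} (hs : s < τ1) (h12 : τ1 ≤ τ2) (he : τ2 < e) :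
    cc1 s e τ2 ≤ cc1 s e τ1 := by
  obtain ⟨h1, h2, h3⟩ := casts hs (lt_of_le_of_lt h12 he)
  obtain ⟨h1', h2', h3'⟩ := casts (lt_of_lt_of_le hs h12) he
  have h12' : (τ1:ℝ) ≤ τ2 := by exact_mod_cast h12
  apply Real.sqrt_le_sqrt
  rw [div_le_div_iff₀ (by positivity) (by positivity)]
  nlinarith [mul_nonneg (mul_nonneg h3.le h3.le) (sub_nonneg.mpr h12')]

lemma covCusum_eq {p : ℕ} (S : ℕ → Matrix (Fin p) (Fin p) ℝ) (s e t : ℕ) :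
    covCusum S s e t = cc1 s e t • (∑ i ∈ Ioc s t, S i) - cc2 s e t • (∑ i ∈ Ioc t e, S i) :=
  rfl

/-! ### Decomposition of the CUSUM on a change-point-free block -/

lemma cusum_decomp {p : ℕ} (S : ℕ → Matrix (Fin p) (Fin p) ℝ) (C : Matrix (Fin p) (Fin p) ℝ)
    (s e t1 t t2 : ℕ) (h0 : s ≤ t1) (h1 : t1 ≤ t) (h2 : t ≤ t2) (h3 : t2 ≤ e)
    (hC : ∀ i ∈ Ioc t1 t2, S i = C) :
    covCusum S s e t = cc1 s e t • (∑ i ∈ Ioc s t1, S i)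
      + (cc1 s e t * ((t : ℝ) - t1)) • C
      - cc2 s e t • (∑ i ∈ Ioc t2 e, S i)
      - (cc2 s e t * ((t2 : ℝ) - t)) • C := by
  have e1 : ∑ i ∈ Ioc s t, S i = (∑ i ∈ Ioc s t1, S i) + ((t - t1 : ℕ) : ℝ) • C := by
    rw [← Finset.sum_Ioc_consecutive _ h0 h1]
    congr 1
    rw [Finset.sum_congr rfl (fun i hi => hC i (Finset.Ioc_subset_Ioc le_rfl h2 hi)),
      Finset.sum_const, Nat.card_Ioc, Nat.cast_smul_eq_nsmul]
  have e2 : ∑ i ∈ Ioc t e, S i = ((t2 - t : ℕ) : ℝ) • C + ∑ i ∈ Ioc t2 e, S i := by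
    rw [← Finset.sum_Ioc_consecutive _ h2 h3]
    congr 1
    rw [Finset.sum_congr rfl (fun i hi => hC i (Finset.Ioc_subset_Ioc h1 le_rfl hi)),
      Finset.sum_const, Nat.card_Ioc, Nat.cast_smul_eq_nsmul]
  have hc1 : ((t - t1 : ℕ) : ℝ) = (t : ℝ) - t1 := by
    push_cast [h1]; ring
  have hc2 : ((t2 - t : ℕ) : ℝ) = (t2 : ℝ) - t := by
    push_cast [h2]; ring
  rw [covCusum_eq, e1, e2, hc1, hc2]
  module

/-- On an interior change-point-free block, the CUSUM is a sub-convex combination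
of its values at the two block endpoints. -/
lemma cusum_interp {p : ℕ} (S : ℕ → Matrix (Fin p) (Fin p) ℝ) (C : Matrix (Fin p) (Fin p) ℝ)
    (s e t1 t t2 : ℕ) (h0 : s < t1) (h1 : t1 ≤ t) (h2 : t ≤ t2) (h3 : t2 < e)
    (hC : ∀ i ∈ Ioc t1 t2, S i = C) :
    ∃ α β : ℝ, 0 ≤ α ∧ 0 ≤ β ∧ α + β ≤ 1 ∧
      covCusum S s e t = α • covCusum S s e t1 + β • covCusum S s e t2 := by
  have hst : s < t := lt_of_lt_of_le h0 h1
  have hte : t < e := lt_of_le_of_lt h2 h3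
  have ht1e : t1 < e := lt_of_le_of_lt h1 hte
  have hst2 : s < t2 := lt_of_lt_of_le hst h2
  obtain ⟨α, β, hα, hβ, hsum, heq1, heq2⟩ := scalar_combo (cc1 s e t1) (cc2 s e t1)
    (cc1 s e t) (cc2 s e t) (cc1 s e t2) (cc2 s e t2)
    (cc2_pos h0 ht1e) (cc2_pos hst hte) (cc2_pos hst2 h3)
    (by rw [cc_prod h0 ht1e, cc_prod hst hte])
    (by rw [cc_prod hst2 h3, cc_prod hst hte])
    (cc2_mono h0 h1 hte) (cc2_mono hst h2 h3)
  refine ⟨α, β, hα, hβ, hsum, ?_⟩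
  have idt := cc_id hst hte
  have id1 := cc_id h0 ht1e
  have id2 := cc_id hst2 h3
  rw [cusum_decomp S C s e t1 t t2 h0.le h1 h2 h3.le hC,
    cusum_decomp S C s e t1 t1 t2 h0.le le_rfl (h1.trans h2) h3.le hC,
    cusum_decomp S C s e t1 t2 t2 h0.le (h1.trans h2) le_rfl h3.le hC]
  match_scalars
  · linear_combination -heq1
  · linear_combination idt + ((t1:ℝ) - s) * heq1 - ((e:ℝ) - t2) * heq2 - α * id1 - β * id2
  · linear_combination heq2

/-- If there is no change point in `(s, t]`, the CUSUM at `t` is a contraction of its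
value at the right endpoint of the block. -/
lemma cusum_first_block {p : ℕ} (S : ℕ → Matrix (Fin p) (Fin p) ℝ)
    (C : Matrix (Fin p) (Fin p) ℝ) (s e t t2 : ℕ)
    (h1 : s < t) (h2 : t ≤ t2) (h3 : t2 < e)
    (hC : ∀ i ∈ Ioc s t2, S i = C) :
    ∃ r : ℝ, 0 ≤ r ∧ r ≤ 1 ∧ covCusum S s e t = r • covCusum S s e t2 := by
  have hst2 : s < t2 := lt_of_lt_of_le h1 h2
  have hte : t < e := lt_of_le_of_lt h2 h3
  have hb2 : 0 < cc2 s e t2 := cc2_pos hst2 h3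
  have hb : 0 < cc2 s e t := cc2_pos h1 hte
  obtain ⟨r, hr0, hr1, hrb⟩ : ∃ r : ℝ, 0 ≤ r ∧ r ≤ 1 ∧ r * cc2 s e t2 = cc2 s e t :=
    ⟨cc2 s e t / cc2 s e t2, div_nonneg hb.le hb2.le,
      (div_le_one hb2).mpr (cc2_mono h1 h2 h3), div_mul_cancel₀ _ hb2.ne'⟩
  refine ⟨r, hr0, hr1, ?_⟩
  have idt := cc_id h1 hte
  have id2 := cc_id hst2 h3
  rw [cusum_decomp S C s e s t t2 le_rfl h1.le h2 h3.le hC,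
    cusum_decomp S C s e s t2 t2 le_rfl hst2.le le_rfl h3.le hC,
    Finset.Ioc_self, Finset.sum_empty, smul_zero, smul_zero]
  match_scalars
  · linear_combination idt - ((e:ℝ) - t2) * hrb - r * id2
  · linear_combination hrb

/-- If there is no change point in `[t, e)`, the CUSUM at `t` is a contraction of its
value at the left endpoint of the block. -/
lemma cusum_last_block {p : ℕ} (S : ℕ → Matrix (Fin p) (Fin p) ℝ)
    (C : Matrix (Fin p) (Fin p) ℝ) (s e t t1 : ℕ)
    (h1 : s < t1) (h2 : t1 ≤ t) (h3 : t < e)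
    (hC : ∀ i ∈ Ioc t1 e, S i = C) :
    ∃ r : ℝ, 0 ≤ r ∧ r ≤ 1 ∧ covCusum S s e t = r • covCusum S s e t1 := by
  have hst : s < t := lt_of_lt_of_le h1 h2
  have ht1e : t1 < e := lt_of_le_of_lt h2 h3
  have ha1 : 0 < cc1 s e t1 := cc1_pos h1 ht1e
  have ha : 0 < cc1 s e t := cc1_pos hst h3
  obtain ⟨r, hr0, hr1, hra⟩ : ∃ r : ℝ, 0 ≤ r ∧ r ≤ 1 ∧ r * cc1 s e t1 = cc1 s e t :=
    ⟨cc1 s e t / cc1 s e t1, div_nonneg ha.le ha1.le,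
      (div_le_one ha1).mpr (cc1_anti h1 h2 h3), div_mul_cancel₀ _ ha1.ne'⟩
  refine ⟨r, hr0, hr1, ?_⟩
  have idt := cc_id hst h3
  have id1 := cc_id h1 ht1e
  rw [cusum_decomp S C s e t1 t e h1.le h2 h3.le le_rfl hC,
    cusum_decomp S C s e t1 t1 e h1.le le_rfl (h2.trans h3.le) le_rfl hC,
    Finset.Ioc_self, Finset.sum_empty, smul_zero, smul_zero]
  match_scalars
  · linear_combination -hra
  · linear_combination idt + ((t1:ℝ) - s) * hra - r * id1

/-! ### Norm lemmas -/

lemma matOpNorm_nonneg {p : ℕ} (M : Matrix (Fin p) (Fin p) ℝ) : 0 ≤ matOpNorm M :=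
  norm_nonneg _

lemma matOpNorm_smul {p : ℕ} (a : ℝ) (M : Matrix (Fin p) (Fin p) ℝ) :
    matOpNorm (a • M) = |a| * matOpNorm M := by
  unfold matOpNorm
  rw [_root_.map_smul]
  rw [norm_smul a (Matrix.toEuclideanCLM (𝕜 := ℝ) M :
    EuclideanSpace ℝ (Fin p) →L[ℝ] EuclideanSpace ℝ (Fin p)), Real.norm_eq_abs]

lemma matOpNorm_add_le {p : ℕ} (M N : Matrix (Fin p) (Fin p) ℝ) :
    matOpNorm (M + N) ≤ matOpNorm M + matOpNorm N := by
  unfold matOpNorm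
  rw [map_add]
  exact norm_add_le _ _

lemma matOpNorm_smul_le {p : ℕ} {r : ℝ} (hr0 : 0 ≤ r) (hr1 : r ≤ 1)
    (M : Matrix (Fin p) (Fin p) ℝ) : matOpNorm (r • M) ≤ matOpNorm M := by
  rw [matOpNorm_smul, abs_of_nonneg hr0]
  nlinarith [matOpNorm_nonneg M]

lemma matOpNorm_comb_le {p : ℕ} {α β : ℝ} (hα : 0 ≤ α) (hβ : 0 ≤ β) (hs : α + β ≤ 1)
    (M N : Matrix (Fin p) (Fin p) ℝ) :
    matOpNorm (α • M + β • N) ≤ max (matOpNorm M) (matOpNorm N) := by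
  calc matOpNorm (α • M + β • N) ≤ matOpNorm (α • M) + matOpNorm (β • N) :=
        matOpNorm_add_le _ _
    _ = α * matOpNorm M + β * matOpNorm N := by
        rw [matOpNorm_smul, matOpNorm_smul, abs_of_nonneg hα, abs_of_nonneg hβ]
    _ ≤ α * max (matOpNorm M) (matOpNorm N) + β * max (matOpNorm M) (matOpNorm N) := by
        gcongr
        · exact le_max_left _ _
        · exact le_max_right _ _
    _ = (α + β) * max (matOpNorm M) (matOpNorm N) := by ring
    _ ≤ 1 * max (matOpNorm M) (matOpNorm N) := by
        have h0 : 0 ≤ max (matOpNorm M) (matOpNorm N) :=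
          le_trans (matOpNorm_nonneg M) (le_max_left _ _)
        nlinarith
    _ = max (matOpNorm M) (matOpNorm N) := one_mul _

/-! ### Main theorem -/

theorem covCusum_opNorm_maximized_at_change_point
    {p : ℕ} (n K : ℕ) (S : ℕ → Matrix (Fin p) (Fin p) ℝ) (η : ℕ → ℕ)
    (hsym : ∀ i, (S i).IsSymm)
    (hη0 : η 0 = 0) (hηlast : η (K + 1) = n)
    (hmono : ∀ k, k ≤ K → η k < η (k + 1))
    -- the covariances are constant between consecutive change points
    (hconst : ∀ k, k ≤ K → ∀ i j, η k < i → i ≤ η (k + 1) → η k < j → j ≤ η (k + 1) →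
      S i = S j)
    (s e : ℕ) (hse : s < e) (hen : e ≤ n)
    -- `(s, e)` contains at least one change point
    (hcp : ∃ k, 1 ≤ k ∧ k ≤ K ∧ s < η k ∧ η k < e) :
    ∃ k, 1 ≤ k ∧ k ≤ K ∧ s < η k ∧ η k < e ∧
      ∀ t, s < t → t < e → matOpNorm (covCusum S s e t) ≤ matOpNorm (covCusum S s e (η k)) := by
  classical
  -- strict monotonicity of η on [0, K+1]
  have hmono' : ∀ b, b ≤ K + 1 → ∀ a, a < b → η a < η b := by
    intro b
    induction b with
    | zero => intro _ a ha; omega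
    | succ c ih =>
      intro hb a ha
      rcases Nat.lt_succ_iff_lt_or_eq.mp ha with h | h
      · exact (ih (by omega) a h).trans (hmono c (by omega))
      · subst h; exact hmono a (by omega)
  have hmle : ∀ a b, b ≤ K + 1 → a ≤ b → η a ≤ η b := by
    intro a b hb hab
    rcases eq_or_lt_of_le hab with h | h
    · subst h; exact le_rfl
    · exact (hmono' b hb a h).le
  -- the finite set of change points inside (s,e)
  set CP := (Finset.Icc 1 K).filter (fun k => s < η k ∧ η k < e) with hCP
  have hne : CP.Nonempty := by
    obtain ⟨k, h1, h2, h3, h4⟩ := hcp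
    refine ⟨k, ?_⟩
    simp only [hCP, Finset.mem_filter, Finset.mem_Icc]
    exact ⟨⟨h1, h2⟩, h3, h4⟩
  obtain ⟨k0, hk0mem, hk0max⟩ :=
    Finset.exists_max_image CP (fun k => matOpNorm (covCusum S s e (η k))) hne
  have hk0mem' := hk0mem
  simp only [hCP, Finset.mem_filter, Finset.mem_Icc] at hk0mem'
  obtain ⟨⟨hk01, hk0K⟩, hk0s, hk0e⟩ := hk0mem'
  have key : ∀ j, 1 ≤ j → j ≤ K → s < η j → η j < e →
      matOpNorm (covCusum S s e (η j)) ≤ matOpNorm (covCusum S s e (η k0)) := by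
    intro j h1 h2 h3 h4
    apply hk0max
    simp only [hCP, Finset.mem_filter, Finset.mem_Icc]
    exact ⟨⟨h1, h2⟩, h3, h4⟩
  refine ⟨k0, hk01, hk0K, hk0s, hk0e, ?_⟩
  intro t hst hte
  -- locate the change-point-free block containing t
  obtain ⟨k, hkK, hkt, htk⟩ : ∃ k, k ≤ K ∧ η k < t ∧ t ≤ η (k + 1) := by
    set F := (Finset.range (K + 1)).filter (fun k => η k < t) with hF
    have h0F : 0 ∈ F := by
      simp only [hF, Finset.mem_filter, Finset.mem_range]
      exact ⟨by omega, by rw [hη0]; omega⟩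
    have hFne : F.Nonempty := ⟨0, h0F⟩
    set k := F.max' hFne with hk
    have hkF : k ∈ F := F.max'_mem hFne
    simp only [hF, Finset.mem_filter, Finset.mem_range] at hkF
    refine ⟨k, by omega, hkF.2, ?_⟩
    by_contra h
    push_neg at h
    have hmem : k + 1 ∈ F := by
      simp only [hF, Finset.mem_filter, Finset.mem_range]
      constructor
      · by_contra hk'
        have hkK' : k = K := by omega
        rw [hkK', hηlast] at h
        omega
      · omega
    have := F.le_max' _ hmem
    omega
  set C := S (η k + 1) with hCdef
  have hCblock : ∀ i ∈ Ioc (η k) (η (k + 1)), S i = C := by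
    intro i hi
    rw [Finset.mem_Ioc] at hi
    exact hconst k hkK i (η k + 1) hi.1 hi.2 (Nat.lt_succ_self _) (hmono k hkK)
  by_cases h1 : s < η k
  · have hk1 : 1 ≤ k := by
      by_contra hk'
      have : k = 0 := by omega
      rw [this, hη0] at h1
      omega
    by_cases h2 : η (k + 1) < e
    · -- middle block: both endpoints are change points in (s,e)
      have hk1K : k + 1 ≤ K := by
        by_contra hk'
        have : k + 1 = K + 1 := by omega
        rw [this, hηlast] at h2
        omega
      obtain ⟨α, β, hα, hβ, hs1, heq⟩ :=
        cusum_interp S C s e (η k) t (η (k + 1)) h1 hkt.le htk h2 hCblock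
      rw [heq]
      have b1 := key k hk1 hkK h1 (lt_trans hkt hte)
      have b2 := key (k + 1) (by omega) hk1K (lt_of_lt_of_le hst htk) h2
      calc matOpNorm (α • covCusum S s e (η k) + β • covCusum S s e (η (k + 1)))
          ≤ max (matOpNorm (covCusum S s e (η k))) (matOpNorm (covCusum S s e (η (k + 1)))) :=
            matOpNorm_comb_le hα hβ hs1 _ _
        _ ≤ matOpNorm (covCusum S s e (η k0)) := max_le b1 b2
    · -- last block
      push_neg at h2
      obtain ⟨r, hr0, hr1, heq⟩ := cusum_last_block S C s e t (η k) h1 hkt.le hte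
        (fun i hi => hCblock i (Finset.Ioc_subset_Ioc le_rfl h2 hi))
      rw [heq]
      exact (matOpNorm_smul_le hr0 hr1 _).trans (key k hk1 hkK h1 (lt_trans hkt hte))
  · push_neg at h1
    by_cases h2 : η (k + 1) < e
    · -- first block
      have hk1K : k + 1 ≤ K := by
        by_contra hk'
        have : k + 1 = K + 1 := by omega
        rw [this, hηlast] at h2
        omega
      obtain ⟨r, hr0, hr1, heq⟩ := cusum_first_block S C s e t (η (k + 1)) hst htk h2
        (fun i hi => hCblock i (Finset.Ioc_subset_Ioc h1 le_rfl hi))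
      rw [heq]
      exact (matOpNorm_smul_le hr0 hr1 _).trans
        (key (k + 1) (by omega) hk1K (lt_of_lt_of_le hst htk) h2)
    · -- no change point in (s,e): contradiction
      push_neg at h2
      exfalso
      obtain ⟨j, hj1, hjK, hjs, hje⟩ := hcp
      have hkj : k < j := by
        by_contra hjk
        push_neg at hjk
        have := hmle j k (by omega) hjk
        omega
      have := hmle (k + 1) j (by omega) (by omega)
      omega
end

section
/- Let f : {s+1,…,e} → R be piecewise constant with at least two change points η_r < η_{r+1} in (s,e], where η_r is the first change point in (s,e). If η_r − s ≤ c₁²Δ, where Δ ≤ η_{r+1} − η_r, then |f̃_{η_r}^{s,e}| ≤ c₁·|f̃_{η_{r+1}}^{s,e}| + 2·κ_r·√(η_r − s), where κ_r is the jump size at η_r and f̃ is the univariate CUSUM statistic. -/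
open Finset

/-- The univariate CUSUM statistic of a sequence `f` over `(s, e]` at time `t`. -/
noncomputable def cusum1d (f : ℕ → ℝ) (s e t : ℕ) : ℝ :=
  Real.sqrt (((e : ℝ) - t) / (((e : ℝ) - s) * ((t : ℝ) - s))) * ∑ i ∈ Ioc s t, f i -
    Real.sqrt (((t : ℝ) - s) / (((e : ℝ) - s) * ((e : ℝ) - t))) * ∑ i ∈ Ioc t e, f i

private lemma sqrt_mul_right' (x c : ℝ) (hx : 0 ≤ x) (hc : 0 ≤ c) :
    Real.sqrt x * c = Real.sqrt (x * c ^ 2) := by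
  rw [Real.sqrt_mul hx, Real.sqrt_sq hc]

set_option maxHeartbeats 1000000 in
private lemma key (σ r t ε a b B c₁ κ : ℝ)
    (hσr : σ < r) (hrt : r < t) (htε : t ≤ ε) (hc : 0 < c₁)
    (hc2 : r - σ ≤ c₁ ^ 2 * (t - σ)) (hκ : κ = |a - b|)
    (hB : ε = t → B = 0) :
    |Real.sqrt ((ε - r) / ((ε - σ) * (r - σ))) * ((r - σ) * a) -
      Real.sqrt ((r - σ) / ((ε - σ) * (ε - r))) * ((t - r) * b + B)| ≤
    c₁ * |Real.sqrt ((ε - t) / ((ε - σ) * (t - σ))) * ((r - σ) * a + (t - r) * b) -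
      Real.sqrt ((t - σ) / ((ε - σ) * (ε - t))) * B| + 2 * κ * Real.sqrt (r - σ) := by
  have hrσ : 0 < r - σ := by linarith
  have htσ : 0 < t - σ := by linarith
  have hεσ : 0 < ε - σ := by linarith
  have hεr : 0 < ε - r := by linarith
  have htr : 0 < t - r := by linarith
  have hκ0 : 0 ≤ κ := hκ ▸ abs_nonneg _
  set p := Real.sqrt ((r - σ) / ((ε - σ) * (ε - r))) with hp
  set u := Real.sqrt ((ε - r) / ((ε - σ) * (r - σ))) with hu
  have hp0 : 0 ≤ p := Real.sqrt_nonneg _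
  have h1 : u * (r - σ) = p * (ε - r) := by
    rw [hu, hp, sqrt_mul_right' _ _ (by positivity) hrσ.le,
        sqrt_mul_right' _ _ (by positivity) hεr.le]
    congr 1
    field_simp
  have hpE : p * (ε - r) ≤ Real.sqrt (r - σ) := by
    rw [hp, sqrt_mul_right' _ _ (by positivity) hεr.le]
    apply Real.sqrt_le_sqrt
    rw [div_mul_eq_mul_div, div_le_iff₀ (by positivity)]
    nlinarith [mul_le_mul_of_nonneg_left (show ε - r ≤ ε - σ by linarith)
      (mul_pos hrσ hεr).le]
  rcases eq_or_lt_of_le htε with hte | hte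
  · -- boundary case t = ε
    have hB0 : B = 0 := hB hte.symm
    have hw0 : Real.sqrt ((ε - t) / ((ε - σ) * (t - σ))) = 0 := by
      rw [show ε - t = 0 by linarith, zero_div, Real.sqrt_zero]
    rw [hB0, hw0]
    simp only [zero_mul, mul_zero, sub_zero, abs_zero, add_zero]
    have hX0 : u * ((r - σ) * a) - p * ((t - r) * b) = p * ((ε - r) * (a - b)) := by
      linear_combination a * h1 - p * b * hte
    rw [hX0, abs_mul, abs_mul, abs_of_nonneg hp0, abs_of_nonneg hεr.le, ← hκ]
    nlinarith [mul_le_mul_of_nonneg_right hpE hκ0, Real.sqrt_nonneg (r - σ)]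
  · -- main case t < ε
    have hεt : 0 < ε - t := by linarith
    set q := Real.sqrt ((t - σ) / ((ε - σ) * (ε - t))) with hq
    set w := Real.sqrt ((ε - t) / ((ε - σ) * (t - σ))) with hw
    have hq0 : 0 < q := Real.sqrt_pos.mpr (by positivity)
    have hw0 : 0 ≤ w := Real.sqrt_nonneg _
    have h2 : w * (t - σ) = q * (ε - t) := by
      rw [hw, hq, sqrt_mul_right' _ _ (by positivity) htσ.le,
          sqrt_mul_right' _ _ (by positivity) hεt.le]
      congr 1
      field_simp
    have hpq : p ≤ c₁ * q := by
      have hcq : c₁ * q = Real.sqrt (c₁ ^ 2 * ((t - σ) / ((ε - σ) * (ε - t)))) := by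
        rw [hq, Real.sqrt_mul (sq_nonneg c₁), Real.sqrt_sq hc.le]
      rw [hp, hcq]
      apply Real.sqrt_le_sqrt
      rw [show c₁ ^ 2 * ((t - σ) / ((ε - σ) * (ε - t))) =
          (c₁ ^ 2 * (t - σ)) / ((ε - σ) * (ε - t)) from by ring,
        div_le_div_iff₀ (by positivity) (by positivity)]
      nlinarith [mul_le_mul_of_nonneg_right hc2 (mul_pos hεσ hεt).le,
        mul_le_mul_of_nonneg_left (show ε - t ≤ ε - r by linarith)
          (show (0:ℝ) ≤ c₁ ^ 2 * (t - σ) * (ε - σ) by positivity)]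
    have hpw : p * w * (r - σ) ≤ Real.sqrt (r - σ) * q := by
      rw [hp, hw, hq, ← Real.sqrt_mul (by positivity),
        sqrt_mul_right' _ _ (by positivity) hrσ.le, ← Real.sqrt_mul hrσ.le]
      apply Real.sqrt_le_sqrt
      have hL : (r - σ) / ((ε - σ) * (ε - r)) * ((ε - t) / ((ε - σ) * (t - σ))) * (r - σ) ^ 2 =
          ((r - σ) * (ε - t) * (r - σ) ^ 2) / ((ε - σ) * (ε - r) * ((ε - σ) * (t - σ))) := by
        rw [div_mul_div_comm, div_mul_eq_mul_div]
      have hR : (r - σ) * ((t - σ) / ((ε - σ) * (ε - t))) =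
          ((r - σ) * (t - σ)) / ((ε - σ) * (ε - t)) := mul_div_assoc' _ _ _
      rw [hL, hR, div_le_div_iff₀ (by positivity) (by positivity)]
      have e1 : (r - σ) ^ 2 ≤ (t - σ) ^ 2 := by nlinarith
      have e2 : (ε - t) ^ 2 ≤ (ε - σ) * (ε - r) := by nlinarith
      have eA : (r - σ) ^ 2 * (ε - t) ^ 2 ≤ (t - σ) ^ 2 * ((ε - σ) * (ε - r)) :=
        mul_le_mul e1 e2 (by positivity) (by positivity)
      nlinarith [mul_le_mul_of_nonneg_left eA (show (0:ℝ) ≤ (r - σ) * (ε - σ) by positivity)]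
    have hX : u * ((r - σ) * a) - p * ((t - r) * b + B) =
        p * ((ε - t) * b - B) + p * ((ε - r) * (a - b)) := by
      linear_combination a * h1
    have hY : w * ((r - σ) * a + (t - r) * b) - q * B =
        w * ((r - σ) * (a - b)) + q * ((ε - t) * b - B) := by
      linear_combination b * h2
    set C := (ε - t) * b - B with hC
    set Y := w * ((r - σ) * a + (t - r) * b) - q * B with hYdef
    have hXle : |u * ((r - σ) * a) - p * ((t - r) * b + B)| ≤ p * |C| + p * ((ε - r) * κ) := by
      rw [hX]
      calc |p * C + p * ((ε - r) * (a - b))| ≤ |p * C| + |p * ((ε - r) * (a - b))| :=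
            abs_add_le _ _
        _ = p * |C| + p * ((ε - r) * κ) := by
            rw [abs_mul, abs_mul, abs_mul, abs_of_nonneg hp0, abs_of_nonneg hεr.le, hκ]
    have hYge : q * |C| ≤ |Y| + w * ((r - σ) * κ) := by
      have h3 : q * C = Y - w * ((r - σ) * (a - b)) := by
        rw [hYdef]; linear_combination -hY
      calc q * |C| = |q * C| := by rw [abs_mul, abs_of_nonneg hq0.le]
        _ = |Y - w * ((r - σ) * (a - b))| := by rw [h3]
        _ ≤ |Y| + |w * ((r - σ) * (a - b))| := abs_sub _ _
        _ = |Y| + w * ((r - σ) * κ) := by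
            rw [abs_mul, abs_mul, abs_of_nonneg hw0, abs_of_nonneg hrσ.le, hκ]
    set ρ := p / q with hρ
    have hρq : ρ * q = p := div_mul_cancel₀ p hq0.ne'
    have hρ0 : 0 ≤ ρ := div_nonneg hp0 hq0.le
    have step : p * |C| = ρ * (q * |C|) := by rw [← hρq]; ring
    have step2 : ρ * (q * |C|) ≤ ρ * (|Y| + w * ((r - σ) * κ)) :=
      mul_le_mul_of_nonneg_left hYge hρ0
    have hρc : ρ ≤ c₁ := (div_le_iff₀ hq0).mpr hpq
    have hρw : ρ * (w * (r - σ)) ≤ Real.sqrt (r - σ) := by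
      rw [hρ, div_mul_eq_mul_div, div_le_iff₀ hq0]
      nlinarith [hpw]
    have t1 : ρ * |Y| ≤ c₁ * |Y| := mul_le_mul_of_nonneg_right hρc (abs_nonneg _)
    have t2 : ρ * (w * ((r - σ) * κ)) ≤ Real.sqrt (r - σ) * κ := by
      nlinarith [mul_le_mul_of_nonneg_right hρw hκ0]
    have t3 : p * ((ε - r) * κ) ≤ Real.sqrt (r - σ) * κ := by
      nlinarith [mul_le_mul_of_nonneg_right hpE hκ0]
    linarith [hXle, step, step2, t1, t2, t3]

theorem cusum_boundary_bound_two_change_points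
    (f : ℕ → ℝ) (s e ηr ηr1 : ℕ) (c₁ Δ κr : ℝ) (hc₁ : 0 < c₁) (hΔ : 0 < Δ)
    (hs : s < ηr) (hr : ηr < ηr1) (hre : ηr1 ≤ e)
    -- `ηr` is the first change point in `(s, e)`: `f` is constant on `(s, ηr]`
    (hconst1 : ∀ i, s < i → i ≤ ηr → f i = f ηr)
    -- `f` is constant on `(ηr, ηr1]`
    (hconst2 : ∀ i, ηr < i → i ≤ ηr1 → f i = f ηr1)
    -- jump size at `ηr`
    (hκr : κr = |f (ηr + 1) - f ηr|)
    -- minimal spacing `Δ` between consecutive change points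
    (hspace : Δ ≤ (ηr1 : ℝ) - (ηr : ℝ))
    (hclose : (ηr : ℝ) - (s : ℝ) ≤ c₁ ^ 2 * Δ) :
    |cusum1d f s e ηr| ≤ c₁ * |cusum1d f s e ηr1| + 2 * κr * Real.sqrt ((ηr : ℝ) - s) := by
  set B := ∑ i ∈ Ioc ηr1 e, f i with hBdef
  have hsum1 : ∑ i ∈ Ioc s ηr, f i = ((ηr : ℝ) - s) * f ηr := by
    rw [Finset.sum_congr rfl fun i hi => hconst1 i (Finset.mem_Ioc.mp hi).1 (Finset.mem_Ioc.mp hi).2,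
      Finset.sum_const, Nat.card_Ioc, nsmul_eq_mul, Nat.cast_sub hs.le]
  have hsum2 : ∑ i ∈ Ioc ηr ηr1, f i = ((ηr1 : ℝ) - ηr) * f ηr1 := by
    rw [Finset.sum_congr rfl fun i hi => hconst2 i (Finset.mem_Ioc.mp hi).1 (Finset.mem_Ioc.mp hi).2,
      Finset.sum_const, Nat.card_Ioc, nsmul_eq_mul, Nat.cast_sub hr.le]
  have hsum3 : ∑ i ∈ Ioc ηr e, f i = ((ηr1 : ℝ) - ηr) * f ηr1 + B := by
    rw [← Finset.sum_Ioc_consecutive f hr.le hre, hsum2]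
  have hsum4 : ∑ i ∈ Ioc s ηr1, f i = ((ηr : ℝ) - s) * f ηr + ((ηr1 : ℝ) - ηr) * f ηr1 := by
    rw [← Finset.sum_Ioc_consecutive f hs.le hr.le, hsum1, hsum2]
  have hκ : κr = |f ηr - f ηr1| := by
    rw [hκr, hconst2 (ηr + 1) (Nat.lt_succ_self ηr) hr, abs_sub_comm]
  have hB0 : (e : ℝ) = (ηr1 : ℝ) → B = 0 := by
    intro h
    have he : e = ηr1 := Nat.cast_inj.mp h
    rw [hBdef, he, Finset.Ioc_self, Finset.sum_empty]
  have hc2 : (ηr : ℝ) - s ≤ c₁ ^ 2 * ((ηr1 : ℝ) - s) := by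
    have h1 : c₁ ^ 2 * Δ ≤ c₁ ^ 2 * ((ηr1 : ℝ) - ηr) :=
      mul_le_mul_of_nonneg_left hspace (sq_nonneg c₁)
    have h2 : (s : ℝ) < ηr := by exact_mod_cast hs
    nlinarith [sq_nonneg c₁]
  unfold cusum1d
  rw [hsum1, hsum3, hsum4]
  exact key (s : ℝ) (ηr : ℝ) (ηr1 : ℝ) (e : ℝ) (f ηr) (f ηr1) B c₁ κr
    (by exact_mod_cast hs) (by exact_mod_cast hr) (by exact_mod_cast hre) hc₁ hc2 hκ hB0
end
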